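/- Let H be a real Hilbert space, T_A : H → H nonexpansive, B : H → H both (1/L)-cocoercive and μ-strongly monotone with L, μ > 0, and γ ∈ (0, 2/L). Let T = T_A ∘ (I - γB) and suppose x_* is a fixed point of T. Then for all x ∈ H, ‖Tx - Tx_*‖ ≤ √(1 - 2γμ + μγ²L) · ‖x - x_*‖. -/

import Mathlib

theorem stmt_4 {H : Type*} [NormedAddCommGroup H] [InnerProductSpace ℝ H] [CompleteSpace H]
    (TA B : H → H) (L μ γ : ℝ) (hL : 0 < L) (hμ : 0 < μ)
    (hTA : ∀ x y, ‖TA x - TA y‖ ≤ ‖x - y‖)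
    (hB : ∀ x y, (inner ℝ (x - y) (B x - B y) : ℝ) ≥ (1 / L) * ‖B x - B y‖ ^ 2)
    (hBmono : ∀ x y, (inner ℝ (x - y) (B x - B y) : ℝ) ≥ μ * ‖x - y‖ ^ 2)
    (hγ : 0 < γ) (hγ2 : γ < 2 / L)
    (xstar : H) (hfix : TA (xstar - γ • B xstar) = xstar) :
    ∀ x, ‖TA (x - γ • B x) - TA (xstar - γ • B xstar)‖ ≤
      Real.sqrt (1 - 2 * γ * μ + μ * γ ^ 2 * L) * ‖x - xstar‖ := by
  intro x
  have key : ‖(x - γ • B x) - (xstar - γ • B xstar)‖ ^ 2 ≤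
      (1 - 2 * γ * μ + μ * γ ^ 2 * L) * ‖x - xstar‖ ^ 2 := by
    have hrw : (x - γ • B x) - (xstar - γ • B xstar)
        = (x - xstar) - γ • (B x - B xstar) := by
      rw [smul_sub]; abel
    have hexp : ‖(x - xstar) - γ • (B x - B xstar)‖ ^ 2
        = ‖x - xstar‖ ^ 2 - 2 * γ * (inner ℝ (x - xstar) (B x - B xstar) : ℝ)
          + γ ^ 2 * ‖B x - B xstar‖ ^ 2 := by
      rw [@norm_sub_sq_real, real_inner_smul_right, norm_smul]
      simp [abs_of_pos hγ, mul_pow]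
      ring
    have h1 := hB x xstar
    have h2 := hBmono x xstar
    have hBn : ‖B x - B xstar‖ ^ 2 ≤ L * (inner ℝ (x - xstar) (B x - B xstar) : ℝ) := by
      have := mul_le_mul_of_nonneg_left h1 hL.le
      calc ‖B x - B xstar‖ ^ 2 = L * ((1/L) * ‖B x - B xstar‖ ^ 2) := by
            field_simp
        _ ≤ L * (inner ℝ (x - xstar) (B x - B xstar) : ℝ) := this
    rw [hrw, hexp]
    have hγ2L : γ * L < 2 := (lt_div_iff₀ hL).mp hγ2
    have hcoef : γ ^ 2 * L - 2 * γ ≤ 0 := by nlinarith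
    nlinarith [sq_nonneg γ, mul_le_mul_of_nonneg_left hBn (sq_nonneg γ),
      mul_le_mul_of_nonneg_left h2 (mul_pos hγ (by nlinarith : (0:ℝ) < 2 - γ * L)).le]
  calc ‖TA (x - γ • B x) - TA (xstar - γ • B xstar)‖
      ≤ ‖(x - γ • B x) - (xstar - γ • B xstar)‖ := hTA _ _
    _ = Real.sqrt (‖(x - γ • B x) - (xstar - γ • B xstar)‖ ^ 2) := by
        rw [Real.sqrt_sq (norm_nonneg _)]
    _ ≤ Real.sqrt ((1 - 2 * γ * μ + μ * γ ^ 2 * L) * ‖x - xstar‖ ^ 2) :=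
        Real.sqrt_le_sqrt key
    _ = Real.sqrt (1 - 2 * γ * μ + μ * γ ^ 2 * L) * ‖x - xstar‖ := by
        rw [Real.sqrt_mul', Real.sqrt_sq (norm_nonneg _)]
        exact sq_nonneg _
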